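/- If the command semantics ⟦c⟧ is local, then for all predicates o, p ⊆ Σ: if the interference (o * p, c) is effectful, then the interference (o, c) is effectful. -/

import Mathlib

open Classical

/-- A separation algebra: a partial commutative monoid with a set of units.
The partial binary operation is modeled as an `Option`-valued function;
`op a b = some c` means the composition is defined and equals `c`. -/
structure SepAlg (α : Type) : Type where
  op : α → α → Option α
  emp : Set α
  comm : ∀ a b : α, op a b = op b a
  assoc : ∀ a b c : α,
    (op a b).bind (fun x => op x c) = (op b c).bind (fun y => op a y)
  unit_exists : ∀ a : α, ∃ u ∈ emp, op a u = some a
  unit_undef : ∀ u u' : α, u ∈ emp → u' ∈ emp → u ≠ u' → op u u' = none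

/-- Separating conjunction of predicates. -/
def SepAlg.sepConj {α : Type} (A : SepAlg α) (p q : Set α) : Set α :=
  { s | ∃ a ∈ p, ∃ b ∈ q, A.op a b = some s }

/-- Separating implication of predicates: `p -* q = { s | {s} * p ⊆ q }`. -/
def SepAlg.sepImp {α : Type} (A : SepAlg α) (p q : Set α) : Set α :=
  { s | ∀ a ∈ p, ∀ t : α, A.op s a = some t → t ∈ q }

/-- Lifting of a command semantics to predicates (post-image). -/
def postP {β : Type} (f : β → Set β) (p : Set β) : Set β :=
  { t | ∃ s ∈ p, t ∈ f s }

/-- Locality of a command semantics with respect to a separation algebra. -/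
def IsLocalCmd {α : Type} (A : SepAlg α) (f : α → Set α) : Prop :=
  ∀ p q o : Set α, postP f p ⊆ q → postP f (A.sepConj p o) ⊆ A.sepConj q o

/-- Weakest precondition. -/
def wpre {α : Type} (f : α → Set α) (q : Set α) : Set α := { s | f s ⊆ q }

/-- The future predicate `⟨p⟩ c ⟨q⟩ := p -* wp(c)(q)`. -/
def fut {α : Type} (A : SepAlg α) (f : α → Set α) (p q : Set α) : Set α :=
  A.sepImp p (wpre f q)

/-- Statements of the while-language. -/
inductive Stmt (C : Type) : Type where
  | com : C → Stmt C
  | choice : Stmt C → Stmt C → Stmt C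
  | seq : Stmt C → Stmt C → Stmt C
  | loop : Stmt C → Stmt C

/-- The control-flow relation `S →^c S'`. -/
inductive CtrlStep {C : Type} (skipc : C) : Stmt C → C → Stmt C → Prop where
  | com (c : C) : CtrlStep skipc (Stmt.com c) c (Stmt.com skipc)
  | seqSkip (S : Stmt C) : CtrlStep skipc (Stmt.seq (Stmt.com skipc) S) skipc S
  | loopStep (S : Stmt C) :
      CtrlStep skipc (Stmt.loop S) skipc
        (Stmt.choice (Stmt.com skipc) (Stmt.seq S (Stmt.loop S)))
  | choiceL (S₁ S₂ : Stmt C) : CtrlStep skipc (Stmt.choice S₁ S₂) skipc S₁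
  | choiceR (S₁ S₂ : Stmt C) : CtrlStep skipc (Stmt.choice S₁ S₂) skipc S₂
  | seqStep {S₁ : Stmt C} {c : C} {S₁' : Stmt C} (S₂ : Stmt C) :
      CtrlStep skipc S₁ c S₁' → CtrlStep skipc (Stmt.seq S₁ S₂) c (Stmt.seq S₁' S₂)

/-- The state space `Σ`, a subset of the product of global and local states. -/
abbrev PSt {G L : Type} (S : Set (G × L)) : Type := { p : G × L // p ∈ S }

/-- Componentwise composition of states, defined only when both components are
defined and the result again lies in the state space `S`. -/
noncomputable def pOp {G L : Type} (A : SepAlg G) (B : SepAlg L) {S : Set (G × L)}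
    (x y : PSt S) : Option (PSt S) :=
  match A.op x.1.1 y.1.1, B.op x.1.2 y.1.2 with
  | some g, some l => if h : (g, l) ∈ S then some ⟨(g, l), h⟩ else none
  | _, _ => none

/-- Separating conjunction of state predicates over the product state space. -/
noncomputable def pSep {G L : Type} (A : SepAlg G) (B : SepAlg L) {S : Set (G × L)}
    (p q : Set (PSt S)) : Set (PSt S) :=
  { s | ∃ a ∈ p, ∃ b ∈ q, pOp A B a b = some s }

/-- Locality of a command semantics. -/
noncomputable def LocalSem {G L C : Type} (A : SepAlg G) (B : SepAlg L) {S : Set (G × L)}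
    (sem : C → PSt S → Set (PSt S)) : Prop :=
  ∀ (c : C) (p q o : Set (PSt S)),
    postP (sem c) p ⊆ q → postP (sem c) (pSep A B p o) ⊆ pSep A B q o

/-- An interference `(o, c)` is effectful if it may change the global state. -/
def Effectful {G L C : Type} {S : Set (G × L)} (sem : C → PSt S → Set (PSt S))
    (o : Set (PSt S)) (c : C) : Prop :=
  ∃ s ∈ o, ∃ t ∈ sem c s, t.1.1 ≠ s.1.1

/-- `inter(o, c)`: the recorded interference set of a command. -/
def interOf {G L C : Type} {S : Set (G × L)} (sem : C → PSt S → Set (PSt S))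
    (o : Set (PSt S)) (c : C) : Set (Set (PSt S) × C) :=
  { x | Effectful sem o c ∧ x = (o, c) }

/-- `inter(o, c) ⊑ 𝕀`: either there is no interference to capture, or it is
covered by an interference in `𝕀`. -/
def InterCovered {G L C : Type} {S : Set (G × L)} (sem : C → PSt S → Set (PSt S))
    (o : Set (PSt S)) (c : C) (I : Set (Set (PSt S) × C)) : Prop :=
  ¬ Effectful sem o c ∨ ∃ r : Set (PSt S), (r, c) ∈ I ∧ o ⊆ r

/-- Thread-local safety, by recursion on the step bound `k`. -/
def safe {G L C : Type} {S : Set (G × L)} (sem : C → PSt S → Set (PSt S)) (skipc : C)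
    (P : Set (Set (PSt S))) (I : Set (Set (PSt S) × C)) :
    ℕ → Stmt C → Set (PSt S) → Set (PSt S) → Prop
  | 0, _, _, _ => True
  | k + 1, St, r, q =>
      (St = Stmt.com skipc → r ⊆ q) ∧
      ∀ (c : C) (S' : Stmt C), CtrlStep skipc St c S' →
        InterCovered sem r c I ∧
        ∃ n ∈ P, postP (sem c) r ⊆ n ∧ safe sem skipc P I k S' n q

lemma pOp_fst {G L : Type} (A : SepAlg G) (B : SepAlg L) {S : Set (G × L)}
    (x y z : PSt S) (h : pOp A B x y = some z) :
    A.op x.1.1 y.1.1 = some z.1.1 := by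
  unfold pOp at h
  rcases hg : A.op x.1.1 y.1.1 with _ | g <;> rcases hl : B.op x.1.2 y.1.2 with _ | l <;>
    simp [hg, hl] at h
  rw [← h]

/-- if `⟦c⟧` is local and `(o * p, c)` is effectful, then
`(o, c)` is effectful. -/
theorem stmt18 {G L C : Type} (A : SepAlg G) (B : SepAlg L) {S : Set (G × L)}
    (hemp : ∀ g ∈ A.emp, ∀ l ∈ B.emp, (g, l) ∈ S)
    (hdec : ∀ (g₁ g₂ : G) (l₁ l₂ : L) (g : G) (l : L),
      A.op g₁ g₂ = some g → B.op l₁ l₂ = some l → (g, l) ∈ S → (g₁, l₁) ∈ S)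
    (sem : C → PSt S → Set (PSt S)) (c : C)
    (hloc : ∀ p q o : Set (PSt S),
      postP (sem c) p ⊆ q → postP (sem c) (pSep A B p o) ⊆ pSep A B q o)
    (o p : Set (PSt S))
    (h : Effectful sem (pSep A B o p) c) :
    Effectful sem o c := by
  by_contra hne
  simp only [Effectful, not_exists, not_and, ne_eq, not_not] at hne
  obtain ⟨s, hs, t, ht, hgt⟩ := h
  obtain ⟨a, ha, b, hb, hab⟩ := hs
  have hmem : t ∈ postP (sem c) (pSep A B {a} {b}) :=
    ⟨s, ⟨a, rfl, b, rfl, hab⟩, ht⟩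
  have hsub := hloc {a} (postP (sem c) {a}) {b} (fun x hx => hx) hmem
  obtain ⟨a', ha', b', hb', hab'⟩ := hsub
  obtain ⟨a0, ha0, ha0'⟩ := ha'
  cases ha0; cases hb'
  have hpres : a'.1.1 = a.1.1 := by
    have := hne a ha a' ha0'
    exact this
  have h1 := pOp_fst A B a b s hab
  have h2 := pOp_fst A B a' b t hab'
  rw [hpres, h1] at h2
  exact hgt (Option.some.inj h2).symm
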